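/- Let q > 0 and Φ > 0 with Φ ≠ 1 and ψ(Φ) = q. Then the integral ∫_{(0,∞)} [ (1 − e^{−Φu}) − e^{−u}(1 − e^{−(Φ−1)u})·Φ/(Φ−1) ] Π(du) converges absolutely, and M_q := q + (σ²/2)Φ + ∫_{(0,∞)} [ (1 − e^{−Φu}) − e^{−u}(1 − e^{−(Φ−1)u})·Φ/(Φ−1) ] Π(du) satisfies M_q = Φ(q − ψ(1))/(Φ − 1). -/

import Mathlib

open MeasureTheory Real Set Filter

/-- Laplace exponent `ψ(β) = cβ + (σ²/2)β² + ∫_{(0,∞)} (e^{−βz} − 1 + βz 1_{(0,1)}(z)) ν(dz)`. -/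
noncomputable def laplaceExponent (c σ : ℝ) (ν : Measure ℝ) (β : ℝ) : ℝ :=
  c * β + σ ^ 2 / 2 * β ^ 2 +
    ∫ z in Set.Ioi (0:ℝ),
      (Real.exp (-β * z) - 1 + Set.indicator (Set.Ioo (0:ℝ) 1) (fun w => β * w) z) ∂ν

lemma exp_neg_quad_bound {x : ℝ} (hx : 0 ≤ x) : Real.exp (-x) - 1 + x ≤ x ^ 2 / 2 := by
  set F : ℝ → ℝ := fun x => x ^ 2 / 2 - (Real.exp (-x) - 1 + x) with hF
  have hder : ∀ y : ℝ, HasDerivAt F (y - (-Real.exp (-y) + 1)) y := by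
    intro y
    have h1 : HasDerivAt (fun y : ℝ => Real.exp (-y)) (-Real.exp (-y)) y := by
      have := (Real.hasDerivAt_exp (-y)).comp y (hasDerivAt_neg y); simp at this; exact this
    have h2 : HasDerivAt (fun y : ℝ => y ^ 2 / 2) y y := by
      simpa using (hasDerivAt_pow 2 y).div_const 2
    exact h2.sub ((h1.sub_const 1).add (hasDerivAt_id y))
  have hmono : Monotone F := by
    apply monotone_of_deriv_nonneg
    · exact fun y => (hder y).differentiableAt
    · intro y
      rw [(hder y).deriv]
      nlinarith [Real.add_one_le_exp (-y)]
  have h0 : F 0 ≤ F x := hmono hx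
  simp [hF] at h0
  linarith

lemma integrable_levy_term (ν : Measure ℝ)
    (hν : ∫⁻ z in Set.Ioi (0:ℝ), ENNReal.ofReal (min 1 (z ^ 2)) ∂ν < ⊤)
    {β : ℝ} (hβ : 0 ≤ β) :
    IntegrableOn
      (fun z => Real.exp (-β * z) - 1 + Set.indicator (Set.Ioo (0:ℝ) 1) (fun w => β * w) z)
      (Set.Ioi 0) ν := by
  have hmeas0 : Measurable fun z : ℝ => min 1 (z ^ 2) := by fun_prop
  have hint0 : IntegrableOn (fun z : ℝ => min 1 (z ^ 2)) (Set.Ioi 0) ν := by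
    refine ⟨hmeas0.aestronglyMeasurable, ?_⟩
    rw [hasFiniteIntegral_iff_ofReal (ae_of_all _ fun z => le_min one_pos.le (sq_nonneg z))]
    exact hν
  have hintg : IntegrableOn (fun z : ℝ => max 1 (β ^ 2 / 2) * min 1 (z ^ 2)) (Set.Ioi 0) ν :=
    hint0.const_mul _
  have hmeasf : Measurable fun z : ℝ =>
      Real.exp (-β * z) - 1 + Set.indicator (Set.Ioo (0:ℝ) 1) (fun w => β * w) z := by
    apply Measurable.add
    · fun_prop
    · exact (measurable_const.mul measurable_id).indicator measurableSet_Ioo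
  refine hintg.mono' hmeasf.aestronglyMeasurable ?_
  filter_upwards [ae_restrict_mem measurableSet_Ioi] with u hu
  have hu0 : (0:ℝ) < u := hu
  by_cases h1 : u < 1
  · have hiu : u ∈ Set.Ioo (0:ℝ) 1 := ⟨hu0, h1⟩
    rw [Set.indicator_of_mem hiu]
    have hbu : 0 ≤ β * u := mul_nonneg hβ hu0.le
    have hq : Real.exp (-(β * u)) - 1 + β * u ≤ (β * u) ^ 2 / 2 := exp_neg_quad_bound hbu
    have hpos : 0 ≤ Real.exp (-(β * u)) - 1 + β * u := by
      nlinarith [Real.add_one_le_exp (-(β * u))]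
    have hmin : min 1 (u ^ 2) = u ^ 2 := min_eq_right (by nlinarith)
    have hneg : -β * u = -(β * u) := by ring
    rw [hneg, Real.norm_eq_abs, abs_of_nonneg hpos, hmin]
    have hmax : β ^ 2 / 2 * u ^ 2 ≤ max 1 (β ^ 2 / 2) * u ^ 2 :=
      mul_le_mul_of_nonneg_right (le_max_right _ _) (sq_nonneg u)
    nlinarith
  · push_neg at h1
    rw [Set.indicator_of_notMem (fun h => absurd h.2 (not_lt.2 h1))]
    have hmin : min 1 (u ^ 2) = 1 := min_eq_left (by nlinarith)
    have he1 : Real.exp (-β * u) ≤ 1 := Real.exp_le_one_iff.2 (by nlinarith)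
    have he0 : 0 < Real.exp (-β * u) := Real.exp_pos _
    rw [hmin, Real.norm_eq_abs]
    rw [abs_le]
    constructor
    · nlinarith [le_max_left 1 (β ^ 2 / 2)]
    · nlinarith [le_max_left 1 (β ^ 2 / 2)]

/-- for `q > 0` and `Φ > 0` with `Φ ≠ 1` and `ψ(Φ) = q`, the integral
`∫_{(0,∞)} [(1 − e^{−Φu}) − e^{−u}(1 − e^{−(Φ−1)u})Φ/(Φ−1)] ν(du)` converges
absolutely and `M_q := q + (σ²/2)Φ + ∫ ... = Φ(q − ψ(1))/(Φ − 1).` -/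
theorem M_q_identity
    (c σ q Φ : ℝ) (ν : Measure ℝ)
    (hσ : 0 ≤ σ)
    (hν : ∫⁻ z in Set.Ioi (0:ℝ), ENNReal.ofReal (min 1 (z ^ 2)) ∂ν < ⊤)
    (hq : 0 < q) (hΦ : 0 < Φ) (hΦ1 : Φ ≠ 1)
    (hψΦ : laplaceExponent c σ ν Φ = q) :
    IntegrableOn
      (fun u => (1 - Real.exp (-Φ * u)) -
        Real.exp (-u) * (1 - Real.exp (-(Φ - 1) * u)) * Φ / (Φ - 1)) (Set.Ioi 0) ν
    ∧ q + σ ^ 2 / 2 * Φ +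
        (∫ u in Set.Ioi (0:ℝ),
          ((1 - Real.exp (-Φ * u)) -
            Real.exp (-u) * (1 - Real.exp (-(Φ - 1) * u)) * Φ / (Φ - 1)) ∂ν)
      = Φ * (q - laplaceExponent c σ ν 1) / (Φ - 1) := by
  have hne : Φ - 1 ≠ 0 := sub_ne_zero.2 hΦ1
  have hfΦ := integrable_levy_term ν hν hΦ.le
  have hf1 := integrable_levy_term ν hν (zero_le_one (α := ℝ))
  have key : ∀ u : ℝ,
      (1 - Real.exp (-Φ * u)) -
        Real.exp (-u) * (1 - Real.exp (-(Φ - 1) * u)) * Φ / (Φ - 1)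
      = ((Real.exp (-Φ * u) - 1 + Set.indicator (Set.Ioo (0:ℝ) 1) (fun w => Φ * w) u)
          - Φ * (Real.exp (-1 * u) - 1 + Set.indicator (Set.Ioo (0:ℝ) 1) (fun w => 1 * w) u))
          * (Φ - 1)⁻¹ := by
    intro u
    have hexp : Real.exp (-u) * (1 - Real.exp (-(Φ - 1) * u))
        = Real.exp (-u) - Real.exp (-Φ * u) := by
      rw [mul_sub, mul_one, ← Real.exp_add]
      ring_nf
    have h1u : Real.exp (-1 * u) = Real.exp (-u) := by norm_num
    by_cases hu : u ∈ Set.Ioo (0:ℝ) 1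
    · rw [Set.indicator_of_mem hu, Set.indicator_of_mem hu, hexp, h1u]
      field_simp
      ring
    · rw [Set.indicator_of_notMem hu, Set.indicator_of_notMem hu, hexp, h1u]
      field_simp
      ring
  have hInt : IntegrableOn
      (fun u => ((Real.exp (-Φ * u) - 1 + Set.indicator (Set.Ioo (0:ℝ) 1) (fun w => Φ * w) u)
          - Φ * (Real.exp (-1 * u) - 1 + Set.indicator (Set.Ioo (0:ℝ) 1) (fun w => 1 * w) u))
          * (Φ - 1)⁻¹) (Set.Ioi 0) ν :=
    (hfΦ.sub (hf1.const_mul Φ)).mul_const _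
  refine ⟨hInt.congr (ae_of_all _ fun u => (key u).symm), ?_⟩
  have hIeq : (∫ u in Set.Ioi (0:ℝ),
        ((1 - Real.exp (-Φ * u)) -
          Real.exp (-u) * (1 - Real.exp (-(Φ - 1) * u)) * Φ / (Φ - 1)) ∂ν)
      = ((∫ u in Set.Ioi (0:ℝ),
            (Real.exp (-Φ * u) - 1 + Set.indicator (Set.Ioo (0:ℝ) 1) (fun w => Φ * w) u) ∂ν)
        - Φ * ∫ u in Set.Ioi (0:ℝ),
            (Real.exp (-1 * u) - 1 + Set.indicator (Set.Ioo (0:ℝ) 1) (fun w => 1 * w) u) ∂ν)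
        * (Φ - 1)⁻¹ := by
    rw [integral_congr_ae (ae_of_all _ key), integral_mul_const,
      integral_sub hfΦ (hf1.const_mul Φ), integral_const_mul]
  rw [hIeq]
  rw [laplaceExponent] at hψΦ ⊢
  set IΦ := ∫ u in Set.Ioi (0:ℝ),
      (Real.exp (-Φ * u) - 1 + Set.indicator (Set.Ioo (0:ℝ) 1) (fun w => Φ * w) u) ∂ν
  set I1 := ∫ u in Set.Ioi (0:ℝ),
      (Real.exp (-1 * u) - 1 + Set.indicator (Set.Ioo (0:ℝ) 1) (fun w => 1 * w) u) ∂ν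
  field_simp
  nlinarith [hψΦ]
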